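/- There exists a constant C > 0, depending only on n, α and sup_{x∈[0,1]} max_{i,j} |a_{ij}(x)| (in particular independent of ε_1, …, ε_n), such that for every continuous f : [0,1] → ℝⁿ and every twice continuously differentiable u : [0,1] → ℝⁿ satisfying Lu = f on (0,1), the following holds for each i, every x ∈ [0,1] and k = 0, 1, 2: |u_i^{(k)}(x)| ≤ C · ε_i^{−k/2} · (‖u(0)‖ + ‖u(1)‖ + ‖f‖). -/

import Mathlib

noncomputable def vnorm (n : ℕ) (V : ℕ → ℝ) : ℝ := ⨆ i ∈ Finset.Icc 1 n, |V i|

noncomputable def Lop (n : ℕ) (ε : ℕ → ℝ) (A : ℝ → ℕ → ℕ → ℝ)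
    (ψ : ℝ → ℕ → ℝ) (x : ℝ) (i : ℕ) : ℝ :=
  -(ε i) * iteratedDeriv 2 (fun t => ψ t i) x + ∑ j ∈ Finset.Icc 1 n, A x i j * ψ x j

open Set

lemma le_vnorm (n : ℕ) (V : ℕ → ℝ) (i : ℕ) (h1 : 1 ≤ i) (h2 : i ≤ n) :
    |V i| ≤ vnorm n V := by
  have hmem : i ∈ Finset.Icc 1 n := Finset.mem_Icc.2 ⟨h1, h2⟩
  have hne : (Finset.Icc 1 n).Nonempty := ⟨i, hmem⟩
  have hbdd : BddAbove (Set.range fun j => ⨆ _ : j ∈ Finset.Icc 1 n, |V j|) := by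
    refine ⟨(Finset.Icc 1 n).sup' hne (fun j => |V j|), ?_⟩
    rintro _ ⟨j, rfl⟩
    dsimp only
    by_cases hj : j ∈ Finset.Icc 1 n
    · rw [ciSup_pos hj]; exact Finset.le_sup' (fun j => |V j|) hj
    · haveI : IsEmpty (j ∈ Finset.Icc 1 n) := ⟨hj⟩
      rw [Real.iSup_of_isEmpty]
      exact le_trans (abs_nonneg (V i)) (Finset.le_sup' (fun j => |V j|) hmem)
  calc |V i| = ⨆ _ : i ∈ Finset.Icc 1 n, |V i| := by rw [ciSup_pos hmem]
    _ ≤ vnorm n V := le_ciSup hbdd i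

lemma vnorm_nonneg (n : ℕ) (hn : 1 ≤ n) (V : ℕ → ℝ) : 0 ≤ vnorm n V :=
  le_trans (abs_nonneg _) (le_vnorm n V 1 le_rfl hn)

lemma contDiff_two_iff' {g : ℝ → ℝ} :
    ContDiff ℝ 2 g ↔ Differentiable ℝ g ∧ ContDiff ℝ 1 (deriv g) := by
  rw [show (2 : WithTop ℕ∞) = 1 + 1 by norm_num, contDiff_succ_iff_deriv]
  simp

lemma diff_deriv {g : ℝ → ℝ} (hg : ContDiff ℝ 2 g) : Differentiable ℝ (deriv g) :=
  (contDiff_two_iff'.1 hg).2.differentiable one_ne_zero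

lemma id2_eq_deriv_deriv (g : ℝ → ℝ) : iteratedDeriv 2 g = deriv (deriv g) := by
  rw [show (2:ℕ) = 1 + 1 from rfl, iteratedDeriv_succ, iteratedDeriv_one]

lemma id2_shift (c s : ℝ) (g : ℝ → ℝ) (hg : ContDiff ℝ 2 g) (x : ℝ) :
    iteratedDeriv 2 (fun t => c + s * g t) x = s * iteratedDeriv 2 g x := by
  have hg1 : Differentiable ℝ g := hg.differentiable (by norm_num)
  have hg2 : Differentiable ℝ (deriv g) := diff_deriv hg
  rw [id2_eq_deriv_deriv, id2_eq_deriv_deriv]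
  have h1 : deriv (fun t => c + s * g t) = fun t => s * deriv g t := by
    funext t
    rw [deriv_const_add, deriv_const_mul _ (hg1 t)]
  rw [h1, deriv_const_mul _ (hg2 x)]

lemma deriv2_nonneg_of_isLocalMin {g : ℝ → ℝ} (hg : ContDiff ℝ 2 g) {x : ℝ}
    (h : IsLocalMin g x) : 0 ≤ iteratedDeriv 2 g x := by
  by_contra hneg
  push_neg at hneg
  rw [id2_eq_deriv_deriv] at hneg
  have hg1 : Differentiable ℝ g := hg.differentiable (by norm_num)
  have hgc : Continuous (deriv g) := (contDiff_two_iff'.1 hg).2.continuous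
  have hgx : deriv g x = 0 := h.deriv_eq_zero
  have hcont : Continuous (deriv (deriv g)) :=
    (contDiff_two_iff'.1 hg).2.continuous_deriv le_rfl
  have hev : ∀ᶠ y in nhds x, deriv (deriv g) y < 0 :=
    (hcont.continuousAt (x := x)).tendsto.eventually_lt_const hneg
  have h' : ∀ᶠ y in nhds x, g x ≤ g y := h
  obtain ⟨δ, hδ, hball⟩ := Metric.eventually_nhds_iff.mp (hev.and h')
  set y := x + δ/2 with hy
  have hxy : x < y := by simp [hy]; linarith
  -- deriv g is strictly decreasing on [x, y]
  have hanti : StrictAntiOn (deriv g) (Set.Icc x y) := by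
    apply strictAntiOn_of_deriv_neg (convex_Icc x y) (hgc.continuousOn)
    intro t ht
    rw [interior_Icc] at ht
    have : dist t x < δ := by
      rw [Real.dist_eq, abs_lt]
      constructor <;> [linarith [ht.1]; skip]
      have := ht.2; simp only [hy] at this; linarith
    exact (hball this).1
  have hderivneg : ∀ t ∈ Set.Ioo x y, deriv g t < 0 := by
    intro t ht
    have := hanti (Set.mem_Icc.2 ⟨le_refl x, hxy.le⟩) (Set.mem_Icc.2 ⟨ht.1.le, ht.2.le⟩) ht.1
    rw [hgx] at this
    exact this
  have hanti2 : StrictAntiOn g (Set.Icc x y) := by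
    apply strictAntiOn_of_deriv_neg (convex_Icc x y) (hg.continuous.continuousOn)
    intro t ht
    rw [interior_Icc] at ht
    exact hderivneg t ht
  have hlt : g y < g x :=
    hanti2 (Set.mem_Icc.2 ⟨le_refl x, hxy.le⟩) (Set.mem_Icc.2 ⟨hxy.le, le_refl y⟩) hxy
  have hdy : dist y x < δ := by
    rw [Real.dist_eq, hy]
    rw [show x + δ/2 - x = δ/2 by ring, abs_of_pos (by linarith)]
    linarith
  exact absurd ((hball hdy).2) (not_le.2 hlt)

open Set in
lemma maxprin (n : ℕ) (hn : 1 ≤ n) (A : ℝ → ℕ → ℕ → ℝ)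
    (hAdiag : ∀ x ∈ Set.Icc (0:ℝ) 1, ∀ i, 1 ≤ i → i ≤ n →
      ∑ j ∈ (Finset.Icc 1 n).erase i, |A x i j| < A x i i)
    (hAoff : ∀ x ∈ Set.Icc (0:ℝ) 1, ∀ i j, 1 ≤ i → i ≤ n → 1 ≤ j → j ≤ n → i ≠ j → A x i j ≤ 0)
    (ε : ℕ → ℝ) (hε : ∀ i, 1 ≤ i → i ≤ n → 0 < ε i)
    (v : ℝ → ℕ → ℝ) (hv : ∀ i, 1 ≤ i → i ≤ n → ContDiff ℝ 2 (fun t => v t i))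
    (hL : ∀ y ∈ Set.Ioo (0:ℝ) 1, ∀ i, 1 ≤ i → i ≤ n → 0 ≤ Lop n ε A v y i)
    (h0 : ∀ i, 1 ≤ i → i ≤ n → 0 ≤ v 0 i) (h1 : ∀ i, 1 ≤ i → i ≤ n → 0 ≤ v 1 i) :
    ∀ x ∈ Set.Icc (0:ℝ) 1, ∀ i, 1 ≤ i → i ≤ n → 0 ≤ v x i := by
  have hmem1 : (1 : ℕ) ∈ Finset.Icc 1 n := Finset.mem_Icc.2 ⟨le_rfl, hn⟩
  have hex : ∀ i, 1 ≤ i → i ≤ n →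
      ∃ z ∈ Set.Icc (0:ℝ) 1, IsMinOn (fun t => v t i) (Set.Icc 0 1) z := fun i hi1 hi2 =>
    isCompact_Icc.exists_isMinOn ⟨0, by norm_num⟩ ((hv i hi1 hi2).continuous.continuousOn)
  choose! z hz hzmin using hex
  obtain ⟨i0, hi0mem, hi0min⟩ := Finset.exists_min_image (Finset.Icc 1 n)
    (fun i => v (z i) i) ⟨1, hmem1⟩
  obtain ⟨hi01, hi0n⟩ := Finset.mem_Icc.1 hi0mem
  set m := v (z i0) i0 with hm
  have hkey : ∀ x ∈ Set.Icc (0:ℝ) 1, ∀ j, 1 ≤ j → j ≤ n → m ≤ v x j := by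
    intro x hx j hj1 hj2
    exact le_trans (hi0min j (Finset.mem_Icc.2 ⟨hj1, hj2⟩)) (hzmin j hj1 hj2 hx)
  suffices hms : 0 ≤ m by
    intro x hx i hi1 hi2
    exact le_trans hms (hkey x hx i hi1 hi2)
  by_contra hneg
  push_neg at hneg
  have hz0 : z i0 ∈ Set.Icc (0:ℝ) 1 := hz i0 hi01 hi0n
  have hne0 : z i0 ≠ 0 := by
    intro h; rw [hm, h] at hneg; exact absurd (h0 i0 hi01 hi0n) (not_le.2 hneg)
  have hne1 : z i0 ≠ 1 := by
    intro h; rw [hm, h] at hneg; exact absurd (h1 i0 hi01 hi0n) (not_le.2 hneg)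
  have hzI : z i0 ∈ Set.Ioo (0:ℝ) 1 :=
    ⟨lt_of_le_of_ne hz0.1 (Ne.symm hne0), lt_of_le_of_ne hz0.2 hne1⟩
  have hlocmin : IsLocalMin (fun t => v t i0) (z i0) :=
    (hzmin i0 hi01 hi0n).isLocalMin (Icc_mem_nhds hzI.1 hzI.2)
  have hsecond : 0 ≤ iteratedDeriv 2 (fun t => v t i0) (z i0) :=
    deriv2_nonneg_of_isLocalMin (hv i0 hi01 hi0n) hlocmin
  have hLz := hL (z i0) hzI i0 hi01 hi0n
  rw [Lop] at hLz
  have hsum : 0 ≤ ∑ j ∈ Finset.Icc 1 n, A (z i0) i0 j * v (z i0) j := by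
    have hεp := hε i0 hi01 hi0n
    nlinarith [hsecond, hεp]
  -- now show the sum is negative
  have hsplit : ∑ j ∈ Finset.Icc 1 n, A (z i0) i0 j * v (z i0) j
      = A (z i0) i0 i0 * m + ∑ j ∈ (Finset.Icc 1 n).erase i0, A (z i0) i0 j * v (z i0) j := by
    rw [← Finset.add_sum_erase _ _ hi0mem, hm]
  have hrest : ∑ j ∈ (Finset.Icc 1 n).erase i0, A (z i0) i0 j * v (z i0) j
      ≤ ∑ j ∈ (Finset.Icc 1 n).erase i0, |A (z i0) i0 j| * (-m) := by
    apply Finset.sum_le_sum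
    intro j hj
    have hjmem := Finset.mem_of_mem_erase hj
    obtain ⟨hj1, hjn⟩ := Finset.mem_Icc.1 hjmem
    have hjne : i0 ≠ j := fun h => (Finset.ne_of_mem_erase hj) h.symm
    have hAle : A (z i0) i0 j ≤ 0 := hAoff (z i0) (Set.mem_Icc.2 ⟨hz0.1, hz0.2⟩) i0 j hi01 hi0n hj1 hjn hjne
    have hvj : m ≤ v (z i0) j := hkey (z i0) hz0 j hj1 hjn
    have habs : |A (z i0) i0 j| = -(A (z i0) i0 j) := abs_of_nonpos hAle
    nlinarith [mul_le_mul_of_nonpos_left hvj hAle]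
  have hdiag := hAdiag (z i0) hz0 i0 hi01 hi0n
  have hfinal : A (z i0) i0 i0 * m + ∑ j ∈ (Finset.Icc 1 n).erase i0, |A (z i0) i0 j| * (-m) < 0 := by
    rw [← Finset.sum_mul]
    nlinarith [hdiag, hneg]
  rw [hsplit] at hsum
  nlinarith [hsum, hrest, hfinal]

open Set in
lemma landau {g : ℝ → ℝ} (hg : ContDiff ℝ 2 g) {M0 M2 h : ℝ} (hh0 : 0 < h) (hh2 : h ≤ 1/2)
    (hb0 : ∀ t ∈ Set.Icc (0:ℝ) 1, |g t| ≤ M0)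
    (hb2 : ∀ t ∈ Set.Icc (0:ℝ) 1, |iteratedDeriv 2 g t| ≤ M2)
    {x : ℝ} (hx : x ∈ Set.Icc (0:ℝ) 1) :
    |deriv g x| ≤ 2 * M0 / h + h * M2 := by
  have hg1 : Differentiable ℝ g := hg.differentiable (by norm_num)
  have hgd : Differentiable ℝ (deriv g) := diff_deriv hg
  have hb2' : ∀ t ∈ Set.Icc (0:ℝ) 1, |deriv (deriv g) t| ≤ M2 := by
    intro t ht; rw [← id2_eq_deriv_deriv]; exact hb2 t ht
  have hM2 : 0 ≤ M2 := le_trans (abs_nonneg _) (hb2 0 (by norm_num))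
  rcases le_or_gt x (1/2) with hc | hc
  · -- interval [x, x+h]
    have hq1 : x + h ≤ 1 := by linarith
    have hxq : x < x + h := by linarith
    obtain ⟨c, hcmem, hceq⟩ := exists_deriv_eq_slope g hxq
      (hg.continuous.continuousOn) (hg1.differentiableOn)
    have hcI : c ∈ Set.Icc (0:ℝ) 1 := ⟨le_trans hx.1 hcmem.1.le, le_trans hcmem.2.le hq1⟩
    have hcbound : |deriv g c| ≤ 2 * M0 / h := by
      rw [hceq, show x + h - x = h by ring, abs_div, abs_of_pos hh0, div_le_div_iff_of_pos_right hh0]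
      have := hb0 x hx
      have := hb0 (x+h) ⟨by linarith [hx.1], hq1⟩
      have := abs_sub (g (x+h)) (g x)
      calc |g (x+h) - g x| ≤ |g (x+h)| + |g x| := abs_sub _ _
        _ ≤ 2 * M0 := by linarith
    obtain ⟨d, hdmem, hdeq⟩ := exists_deriv_eq_slope (deriv g) hcmem.1
      (hgd.continuous.continuousOn) (hgd.differentiableOn)
    have hdI : d ∈ Set.Icc (0:ℝ) 1 :=
      ⟨le_trans hx.1 hdmem.1.le, le_trans hdmem.2.le (le_trans hcmem.2.le hq1)⟩
    have heq2 : deriv g x = deriv g c - (c - x) * deriv (deriv g) d := by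
      have hne : c - x ≠ 0 := ne_of_gt (by linarith [hcmem.1])
      field_simp at hdeq
      linarith [hdeq]
    rw [heq2]
    have hd2 := hb2' d hdI
    have hcx : 0 < c - x := by linarith [hcmem.1]
    have hcxh : c - x ≤ h := by linarith [hcmem.2]
    calc |deriv g c - (c - x) * deriv (deriv g) d|
        ≤ |deriv g c| + |(c - x) * deriv (deriv g) d| := abs_sub _ _
      _ ≤ 2 * M0 / h + h * M2 := by
          rw [abs_mul, abs_of_pos hcx]
          have : (c - x) * |deriv (deriv g) d| ≤ h * M2 :=
            mul_le_mul hcxh hd2 (abs_nonneg _) (le_of_lt hh0)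
          linarith [hcbound]
  · -- interval [x-h, x]
    have hp0 : 0 ≤ x - h := by linarith [hx.1]
    have hpx : x - h < x := by linarith
    obtain ⟨c, hcmem, hceq⟩ := exists_deriv_eq_slope g hpx
      (hg.continuous.continuousOn) (hg1.differentiableOn)
    have hcI : c ∈ Set.Icc (0:ℝ) 1 := ⟨le_trans hp0 hcmem.1.le, le_trans hcmem.2.le hx.2⟩
    have hcbound : |deriv g c| ≤ 2 * M0 / h := by
      rw [hceq, show x - (x - h) = h by ring, abs_div, abs_of_pos hh0, div_le_div_iff_of_pos_right hh0]
      have := hb0 x hx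
      have := hb0 (x-h) ⟨hp0, by linarith [hx.2]⟩
      calc |g x - g (x-h)| ≤ |g x| + |g (x-h)| := abs_sub _ _
        _ ≤ 2 * M0 := by linarith
    obtain ⟨d, hdmem, hdeq⟩ := exists_deriv_eq_slope (deriv g) hcmem.2
      (hgd.continuous.continuousOn) (hgd.differentiableOn)
    have hdI : d ∈ Set.Icc (0:ℝ) 1 :=
      ⟨le_trans (le_trans hp0 hcmem.1.le) hdmem.1.le, le_trans hdmem.2.le hx.2⟩
    have heq2 : deriv g x = deriv g c + (x - c) * deriv (deriv g) d := by
      have hne : x - c ≠ 0 := ne_of_gt (by linarith [hcmem.2])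
      field_simp at hdeq
      linarith [hdeq]
    rw [heq2]
    have hd2 := hb2' d hdI
    have hcx : 0 < x - c := by linarith [hcmem.2]
    have hcxh : x - c ≤ h := by linarith [hcmem.1]
    calc |deriv g c + (x - c) * deriv (deriv g) d|
        ≤ |deriv g c| + |(x - c) * deriv (deriv g) d| := abs_add_le _ _
      _ ≤ 2 * M0 / h + h * M2 := by
          rw [abs_mul, abs_of_pos hcx]
          have : (x - c) * |deriv (deriv g) d| ≤ h * M2 :=
            mul_le_mul hcxh hd2 (abs_nonneg _) (le_of_lt hh0)
          linarith [hcbound]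

set_option maxHeartbeats 2000000 in
theorem stmt2
    (n : ℕ) (hn : 1 ≤ n)
    (A : ℝ → ℕ → ℕ → ℝ)
    (hAc : ∀ i j, 1 ≤ i → i ≤ n → 1 ≤ j → j ≤ n →
      ContinuousOn (fun x => A x i j) (Set.Icc 0 1))
    (hAdiag : ∀ x ∈ Set.Icc (0:ℝ) 1, ∀ i, 1 ≤ i → i ≤ n →
      ∑ j ∈ (Finset.Icc 1 n).erase i, |A x i j| < A x i i)
    (hAoff : ∀ x ∈ Set.Icc (0:ℝ) 1, ∀ i j, 1 ≤ i → i ≤ n → 1 ≤ j → j ≤ n → i ≠ j → A x i j ≤ 0)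
    (α : ℝ) (hα0 : 0 < α)
    (hα : ∀ x ∈ Set.Icc (0:ℝ) 1, ∀ i, 1 ≤ i → i ≤ n → α < ∑ j ∈ Finset.Icc 1 n, A x i j)
    :
    ∃ C > 0,
      ∀ ε : ℕ → ℝ,
      (∀ i, 1 ≤ i → i ≤ n → 0 < ε i) →
      (∀ i, 1 ≤ i → i ≤ n → ε i ≤ 1) →
      (∀ i j, 1 ≤ i → i < j → j ≤ n → ε i < ε j) →
      ∀ f u : ℝ → ℕ → ℝ,
      (∀ i, 1 ≤ i → i ≤ n → ContinuousOn (fun x => f x i) (Set.Icc 0 1)) →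
      (∀ i, 1 ≤ i → i ≤ n → ContDiff ℝ 2 (fun t => u t i)) →
      (∀ y ∈ Set.Ioo (0:ℝ) 1, ∀ i, 1 ≤ i → i ≤ n → Lop n ε A u y i = f y i) →
      ∀ Mf : ℝ, (∀ y ∈ Set.Icc (0:ℝ) 1, ∀ i, 1 ≤ i → i ≤ n → |f y i| ≤ Mf) →
      ∀ k : ℕ, k ≤ 2 → ∀ i, 1 ≤ i → i ≤ n → ∀ x ∈ Set.Icc (0:ℝ) 1,
        |iteratedDeriv k (fun t => u t i) x| ≤
          C * ε i ^ (-(k : ℝ) / 2) * (vnorm n (u 0) + vnorm n (u 1) + Mf) := by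
  -- uniform bound on A
  have h1 : ∀ p : ℕ × ℕ, ∃ M, ∀ x ∈ Set.Icc (0:ℝ) 1,
      1 ≤ p.1 → p.1 ≤ n → 1 ≤ p.2 → p.2 ≤ n → |A x p.1 p.2| ≤ M := by
    intro p
    by_cases hp : 1 ≤ p.1 ∧ p.1 ≤ n ∧ 1 ≤ p.2 ∧ p.2 ≤ n
    · obtain ⟨M, hM⟩ := isCompact_Icc.exists_bound_of_continuousOn
        (hAc p.1 p.2 hp.1 hp.2.1 hp.2.2.1 hp.2.2.2)
      exact ⟨M, fun x hx _ _ _ _ => by simpa [Real.norm_eq_abs] using hM x hx⟩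
    · exact ⟨0, fun x hx ha hb hc' hd => absurd ⟨ha, hb, hc', hd⟩ hp⟩
  choose Mp hMp using h1
  have hprodne : (Finset.Icc 1 n ×ˢ Finset.Icc 1 n).Nonempty :=
    ⟨(1,1), Finset.mem_product.2 ⟨Finset.mem_Icc.2 ⟨le_rfl, hn⟩, Finset.mem_Icc.2 ⟨le_rfl, hn⟩⟩⟩
  set MA : ℝ := ((Finset.Icc 1 n ×ˢ Finset.Icc 1 n).sup' hprodne Mp) ⊔ 0 with hMAdef
  have hMA0 : 0 ≤ MA := le_sup_right
  have hMAb : ∀ x ∈ Set.Icc (0:ℝ) 1, ∀ i j, 1 ≤ i → i ≤ n → 1 ≤ j → j ≤ n → |A x i j| ≤ MA := by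
    intro x hx i j hi1 hi2 hj1 hj2
    have hmem : (i,j) ∈ Finset.Icc 1 n ×ˢ Finset.Icc 1 n :=
      Finset.mem_product.2 ⟨Finset.mem_Icc.2 ⟨hi1, hi2⟩, Finset.mem_Icc.2 ⟨hj1, hj2⟩⟩
    exact le_trans (hMp (i,j) x hx hi1 hi2 hj1 hj2)
      (le_trans (Finset.le_sup' Mp hmem) le_sup_left)
  set C0 : ℝ := 1 + 1/α with hC0def
  have hC0pos : 0 < C0 := by rw [hC0def]; positivity
  have hC0ge1 : 1 ≤ C0 := by
    rw [hC0def]; have : 0 < 1/α := by positivity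
    linarith
  set K2 : ℝ := n * MA * C0 + 1 with hK2def
  clear_value MA
  have hK2ge1 : 1 ≤ K2 := by
    have h : 0 ≤ (n:ℝ) * MA * C0 := by positivity
    rw [hK2def]; linarith
  clear_value K2 C0
  refine ⟨4*C0 + 2*K2, by linarith, ?_⟩
  intro ε hεpos hεle hεmono f u hfc hu hLu Mf hMf k hk i hi1 hin x hx
  set B : ℝ := vnorm n (u 0) + vnorm n (u 1) + Mf with hBdef
  clear_value B
  have hMf0 : 0 ≤ Mf :=
    le_trans (abs_nonneg _) (hMf 0 (Set.mem_Icc.2 ⟨le_rfl, by norm_num⟩) 1 le_rfl hn)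
  have hvn0 := vnorm_nonneg n hn (u 0)
  have hvn1 := vnorm_nonneg n hn (u 1)
  have hB0 : 0 ≤ B := by rw [hBdef]; linarith
  have hMfB : Mf ≤ B := by rw [hBdef]; linarith
  have hεi := hεpos i hi1 hin
  -- Step 0 : maximum principle bound
  have hbarrier : ∀ s : ℝ, s = 1 ∨ s = -1 → ∀ y ∈ Set.Icc (0:ℝ) 1, ∀ j, 1 ≤ j → j ≤ n →
      0 ≤ C0 * B + s * u y j := by
    intro s hs
    apply maxprin n hn A hAdiag hAoff ε hεpos (fun t j => C0 * B + s * u t j)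
    · intro j hj1 hj2
      exact contDiff_const.add (contDiff_const.mul (hu j hj1 hj2))
    · intro y hy j hj1 hj2
      have hyI : y ∈ Set.Icc (0:ℝ) 1 := ⟨hy.1.le, hy.2.le⟩
      rw [Lop]
      rw [id2_shift (C0*B) s (fun t => u t j) (hu j hj1 hj2) y]
      have hsum : ∑ l ∈ Finset.Icc 1 n, A y j l * (C0 * B + s * u y l)
          = (C0*B) * (∑ l ∈ Finset.Icc 1 n, A y j l)
            + s * (∑ l ∈ Finset.Icc 1 n, A y j l * u y l) := by
        rw [Finset.mul_sum, Finset.mul_sum, ← Finset.sum_add_distrib]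
        exact Finset.sum_congr rfl fun l _ => by ring
      rw [hsum]
      have hLop := hLu y hy j hj1 hj2
      rw [Lop] at hLop
      have hαj := (hα y hyI j hj1 hj2).le
      have hfb := abs_le.1 (hMf y hyI j hj1 hj2)
      have hid : C0 * B * α = α * B + B := by
        rw [hC0def]; field_simp
      have h2 : C0 * B * α ≤ C0 * B * (∑ l ∈ Finset.Icc 1 n, A y j l) :=
        mul_le_mul_of_nonneg_left hαj (by positivity)
      have hαB : 0 ≤ α * B := by positivity
      rcases hs with rfl | rfl
      · nlinarith [hLop, h2, hid, hfb.1, hfb.2, hαB, hMfB]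
      · nlinarith [hLop, h2, hid, hfb.1, hfb.2, hαB, hMfB]
    · intro j hj1 hj2
      have hvB : vnorm n (u 0) ≤ B := by rw [hBdef]; linarith
      have h := abs_le.1 ((le_vnorm n (u 0) j hj1 hj2).trans hvB)
      have hBC : B ≤ C0 * B := by nlinarith [mul_nonneg (sub_nonneg.2 hC0ge1) hB0]
      rcases hs with rfl | rfl <;> linarith [h.1, h.2, hBC]
    · intro j hj1 hj2
      have hvB : vnorm n (u 1) ≤ B := by rw [hBdef]; linarith
      have h := abs_le.1 ((le_vnorm n (u 1) j hj1 hj2).trans hvB)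
      have hBC : B ≤ C0 * B := by nlinarith [mul_nonneg (sub_nonneg.2 hC0ge1) hB0]
      rcases hs with rfl | rfl <;> linarith [h.1, h.2, hBC]
  have hu0 : ∀ y ∈ Set.Icc (0:ℝ) 1, ∀ j, 1 ≤ j → j ≤ n → |u y j| ≤ C0 * B := by
    intro y hy j hj1 hj2
    have hplus := hbarrier 1 (Or.inl rfl) y hy j hj1 hj2
    have hminus := hbarrier (-1) (Or.inr rfl) y hy j hj1 hj2
    rw [abs_le]; constructor <;> linarith [hplus, hminus]
  -- Step 2 : second derivative bound
  have hu2 : ∀ j, 1 ≤ j → j ≤ n → ∀ y ∈ Set.Icc (0:ℝ) 1,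
      |iteratedDeriv 2 (fun t => u t j) y| ≤ K2 * B / ε j := by
    intro j hj1 hj2
    have hεj := hεpos j hj1 hj2
    have hclosed : IsClosed {y : ℝ | |ε j * iteratedDeriv 2 (fun t => u t j) y| ≤ K2 * B} := by
      apply isClosed_le _ continuous_const
      exact (continuous_const.mul
        ((hu j hj1 hj2).continuous_iteratedDeriv 2 (by exact_mod_cast le_rfl))).abs
    have hsub : Set.Ioo (0:ℝ) 1 ⊆
        {y : ℝ | |ε j * iteratedDeriv 2 (fun t => u t j) y| ≤ K2 * B} := by
      intro y hy
      have hyI : y ∈ Set.Icc (0:ℝ) 1 := ⟨hy.1.le, hy.2.le⟩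
      have hLop := hLu y hy j hj1 hj2
      rw [Lop] at hLop
      have heq : ε j * iteratedDeriv 2 (fun t => u t j) y
          = (∑ l ∈ Finset.Icc 1 n, A y j l * u y l) - f y j := by linarith
      rw [Set.mem_setOf_eq, heq]
      have hsumb : |∑ l ∈ Finset.Icc 1 n, A y j l * u y l| ≤ n * (MA * (C0 * B)) := by
        calc |∑ l ∈ Finset.Icc 1 n, A y j l * u y l|
            ≤ ∑ l ∈ Finset.Icc 1 n, |A y j l * u y l| := Finset.abs_sum_le_sum_abs _ _
          _ ≤ ∑ _l ∈ Finset.Icc 1 n, MA * (C0 * B) := by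
              apply Finset.sum_le_sum
              intro l hl
              obtain ⟨hl1, hl2⟩ := Finset.mem_Icc.1 hl
              rw [abs_mul]
              exact mul_le_mul (hMAb y hyI j l hj1 hj2 hl1 hl2) (hu0 y hyI l hl1 hl2)
                (abs_nonneg _) hMA0
          _ = n * (MA * (C0 * B)) := by
              rw [Finset.sum_const, Nat.card_Icc]
              simp [nsmul_eq_mul]
      have hfb := hMf y hyI j hj1 hj2
      calc |(∑ l ∈ Finset.Icc 1 n, A y j l * u y l) - f y j|
          ≤ |∑ l ∈ Finset.Icc 1 n, A y j l * u y l| + |f y j| := abs_sub _ _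
        _ ≤ n * (MA * (C0*B)) + Mf := by linarith
        _ ≤ K2 * B := by
            have hB' : K2 * B = (n:ℝ) * (MA * (C0 * B)) + B := by rw [hK2def]; ring
            linarith [hMfB, hB']
    intro y hy
    have hIcc : Set.Icc (0:ℝ) 1 ⊆
        {y : ℝ | |ε j * iteratedDeriv 2 (fun t => u t j) y| ≤ K2 * B} := by
      rw [← closure_Ioo (by norm_num : (0:ℝ) ≠ 1)]
      exact closure_minimal hsub hclosed
    have hm := hIcc hy
    rw [Set.mem_setOf_eq, abs_mul, abs_of_pos hεj] at hm
    rw [le_div_iff₀ hεj]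
    linarith [hm]
  -- Step 1 : first derivative bound
  have hu1 : ∀ j, 1 ≤ j → j ≤ n → ∀ y ∈ Set.Icc (0:ℝ) 1,
      |deriv (fun t => u t j) y| ≤ (4*C0 + K2) * B / Real.sqrt (ε j) := by
    intro j hj1 hj2 y hy
    have hεj := hεpos j hj1 hj2
    set s : ℝ := Real.sqrt (ε j) with hsdef
    have hs0 : 0 < s := Real.sqrt_pos.2 hεj
    have hs1 : s ≤ 1 := Real.sqrt_le_one.2 (hεle j hj1 hj2)
    have hss : s * s = ε j := Real.mul_self_sqrt hεj.le
    clear_value s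
    have hland := landau (hu j hj1 hj2) (h := s / 2) (by linarith) (by linarith)
      (fun t ht => hu0 t ht j hj1 hj2) (fun t ht => hu2 j hj1 hj2 t ht) hy
    have h4 : (2*(C0*B)/(s/2) + (s/2)*(K2*B/ε j)) * s = 4*C0*B + K2*B/2 := by
      rw [← hss]; field_simp; ring
    have h3 : |deriv (fun t => u t j) y| * s
        ≤ (2*(C0*B)/(s/2) + (s/2)*(K2*B/ε j)) * s :=
      mul_le_mul_of_nonneg_right hland hs0.le
    rw [le_div_iff₀ hs0]
    nlinarith [h3, h4, hB0, hK2ge1]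
  -- final assembly
  interval_cases k
  · rw [show -((0:ℕ):ℝ)/2 = 0 by norm_num, Real.rpow_zero, iteratedDeriv_zero]
    have := hu0 x hx i hi1 hin
    nlinarith [hB0, hC0pos, hK2ge1]
  · rw [show -((1:ℕ):ℝ)/2 = -(1/2) by norm_num, Real.rpow_neg hεi.le, ← Real.sqrt_eq_rpow,
      iteratedDeriv_one]
    have h := hu1 i hi1 hin x hx
    have hs0 : 0 < Real.sqrt (ε i) := Real.sqrt_pos.2 hεi
    calc |deriv (fun t => u t i) x| ≤ (4*C0 + K2) * B / Real.sqrt (ε i) := h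
      _ ≤ (4*C0 + 2*K2) * B / Real.sqrt (ε i) := by
          rw [div_le_div_iff_of_pos_right hs0]
          nlinarith [hB0, hK2ge1]
      _ = (4*C0 + 2*K2) * (Real.sqrt (ε i))⁻¹ * B := by ring
  · rw [show -((2:ℕ):ℝ)/2 = -1 by norm_num, Real.rpow_neg_one]
    have h := hu2 i hi1 hin x hx
    calc |iteratedDeriv 2 (fun t => u t i) x| ≤ K2 * B / ε i := h
      _ ≤ (4*C0 + 2*K2) * B / ε i := by
          rw [div_le_div_iff_of_pos_right hεi]
          nlinarith [hB0, hC0pos]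
      _ = (4*C0 + 2*K2) * (ε i)⁻¹ * B := by ring
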